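/- Let β > 0, ω > 0 and ε ∈ {1, −1}. Set D_+ := ℂ \ [e^{βω/2}, ∞) for ε = 1 and D_− := ℂ \ (−∞, −e^{βω/2}] for ε = −1. Then for every z in the corresponding domain and every integer k ≥ 0, the point z e^{−(k+1/2)ωβ} lies in the domain of analyticity of f_{3/2}^ε (namely ℂ \ [1,∞) for ε = 1, ℂ \ (−∞,−1] for ε = −1), the series P_∞(β, z, ω) := ω (2πβ)^{−3/2} Σ_{k=0}^∞ f_{3/2}^ε(z e^{−(k+1/2)ωβ}) converges, and the function z ↦ P_∞(β, z, ω) is complex-differentiable (analytic) on the domain D_+ (resp. D_−). -/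

import Mathlib

open MeasureTheory Real Set

noncomputable section

/-- The cut plane `D^ε`: for `ε = 1` this is `ℂ \ [1,∞)`, for `ε = −1` it is
`ℂ \ (−∞,−1]`; both are described by the condition `εζ ∉ [1,∞)`. -/
def cutPlane (ε : ℂ) : Set ℂ := {ζ | ¬((ε * ζ).im = 0 ∧ 1 ≤ (ε * ζ).re)}

/-- The Bose (`ε = 1`) / Fermi (`ε = −1`) function
`f_σ^ε(ζ) = (ζ/Γ(σ)) ∫₀^∞ t^{σ−1}e^{−t}/(1 − ζεe^{−t}) dt`. -/
def boseFermi (σ : ℝ) (ε : ℂ) (ζ : ℂ) : ℂ :=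
  ζ / ((Real.Gamma σ : ℝ) : ℂ) *
    ∫ t in Ioi (0 : ℝ), ((t ^ (σ - 1) * Real.exp (-t) : ℝ) : ℂ) /
      (1 - ζ * ε * ((Real.exp (-t) : ℝ) : ℂ))

/-- The domain `D_±`: for `ε = 1` this is `ℂ \ [e^{βω/2},∞)`, for `ε = −1` it is
`ℂ \ (−∞,−e^{βω/2}]`; both are described by the condition `εz ∉ [e^{βω/2},∞)`. -/
def pressureDomain (ε : ℂ) (β ω : ℝ) : Set ℂ :=
  {z | ¬((ε * z).im = 0 ∧ Real.exp (β * ω / 2) ≤ (ε * z).re)}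

namespace BFAux

lemma isOpen_pressureDomain (ε : ℂ) (β ω : ℝ) : IsOpen (pressureDomain ε β ω) := by
  have h : pressureDomain ε β ω =
      ((fun z : ℂ => ε * z) ⁻¹' {w : ℂ | w.im = 0 ∧ Real.exp (β * ω / 2) ≤ w.re})ᶜ := by
    ext z; simp [pressureDomain, Set.mem_setOf_eq]
  rw [h]
  exact (((isClosed_eq Complex.continuous_im continuous_const).inter
    (isClosed_le continuous_const Complex.continuous_re)).preimage
    (continuous_const.mul continuous_id)).isOpen_compl

lemma cutZero {ε : ℂ} {β ω : ℝ} {z : ℂ} (hz : z ∈ pressureDomain ε β ω)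
    {s : ℝ} (hs0 : 0 ≤ s) (hsM : s ≤ Real.exp (-(β * ω / 2))) :
    1 - z * ε * (s : ℂ) ≠ 0 := by
  intro h
  have hs : s ≠ 0 := by rintro rfl; simp at h
  have hs' : 0 < s := lt_of_le_of_ne hs0 (Ne.symm hs)
  have h1 : z * ε * (s : ℂ) = 1 := by linear_combination -h
  have hsc : (s : ℂ) ≠ 0 := by exact_mod_cast hs
  have h2 : ε * z = ((s⁻¹ : ℝ) : ℂ) := by
    push_cast
    rw [inv_eq_one_div, eq_div_iff hsc]
    linear_combination h1
  apply hz
  constructor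
  · rw [h2]; simp
  · rw [h2]
    simp only [Complex.ofReal_re]
    have : Real.exp (β * ω / 2) = (Real.exp (-(β * ω / 2)))⁻¹ := by
      rw [Real.exp_neg, inv_inv]
    rw [this]
    exact inv_anti₀ hs' hsM

lemma exists_delta {ε : ℂ} {β ω : ℝ} {z₀ : ℂ} (hz₀ : z₀ ∈ pressureDomain ε β ω) :
    ∃ r > 0, ∃ δ > 0, Metric.closedBall z₀ r ⊆ pressureDomain ε β ω ∧
      ∀ z ∈ Metric.closedBall z₀ r, ∀ s ∈ Icc (0 : ℝ) (Real.exp (-(β * ω / 2))),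
        δ ≤ ‖1 - z * ε * (s : ℂ)‖ := by
  obtain ⟨r0, hr0, hball⟩ := Metric.isOpen_iff.mp (isOpen_pressureDomain ε β ω) z₀ hz₀
  have hr : (0 : ℝ) < r0 / 2 := by linarith
  have hsub : Metric.closedBall z₀ (r0 / 2) ⊆ pressureDomain ε β ω :=
    (Metric.closedBall_subset_ball (by linarith)).trans hball
  set K : Set (ℂ × ℝ) := Metric.closedBall z₀ (r0 / 2) ×ˢ Icc 0 (Real.exp (-(β * ω / 2))) with hK
  have hKc : IsCompact K := (isCompact_closedBall _ _).prod isCompact_Icc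
  have hKne : K.Nonempty :=
    ⟨(z₀, 0), ⟨Metric.mem_closedBall_self hr.le, le_refl _, (Real.exp_pos _).le⟩⟩
  have hcont : ContinuousOn (fun p : ℂ × ℝ => ‖1 - p.1 * ε * (p.2 : ℂ)‖) K := by fun_prop
  obtain ⟨p, hpK, hmin⟩ := hKc.exists_isMinOn hKne hcont
  refine ⟨r0 / 2, hr, ‖1 - p.1 * ε * (p.2 : ℂ)‖, ?_, hsub, ?_⟩
  · exact norm_pos_iff.mpr <| cutZero (hsub hpK.1) hpK.2.1 hpK.2.2
  · intro z hzb s hs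
    exact isMinOn_iff.mp hmin (z, s) ⟨hzb, hs⟩

lemma cont_num : Continuous (fun t : ℝ => t ^ ((3:ℝ)/2 - 1) * Real.exp (-t)) :=
  (Real.continuous_rpow_const (by norm_num)).mul (Real.continuous_exp.comp continuous_neg)

lemma meas_integrand (a : ℂ) :
    AEStronglyMeasurable (fun t : ℝ => ((t ^ ((3:ℝ)/2 - 1) * Real.exp (-t) : ℝ) : ℂ) /
      (1 - a * ((Real.exp (-t) : ℝ) : ℂ))) (volume.restrict (Ioi 0)) := by
  apply Measurable.aestronglyMeasurable
  exact (Complex.measurable_ofReal.comp cont_num.measurable).div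
    (by fun_prop : Measurable fun t : ℝ => 1 - a * ((Real.exp (-t) : ℝ) : ℂ))

lemma integrable_bound (δ : ℝ) :
    IntegrableOn (fun t : ℝ => δ⁻¹ * (Real.exp (-t) * t ^ ((3:ℝ)/2 - 1))) (Ioi 0) :=
  (Real.GammaIntegral_convergent (by norm_num : (0:ℝ) < 3/2)).const_mul _

lemma norm_integrand_le {a : ℂ} {δ : ℝ} (hδ : 0 < δ)
    (h : ∀ t : ℝ, 0 < t → δ ≤ ‖1 - a * ((Real.exp (-t) : ℝ) : ℂ)‖) (t : ℝ) (ht : 0 < t) :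
    ‖((t ^ ((3:ℝ)/2 - 1) * Real.exp (-t) : ℝ) : ℂ) / (1 - a * ((Real.exp (-t) : ℝ) : ℂ))‖
      ≤ δ⁻¹ * (Real.exp (-t) * t ^ ((3:ℝ)/2 - 1)) := by
  rw [norm_div, Complex.norm_real, Real.norm_eq_abs,
    abs_of_nonneg (by positivity : (0:ℝ) ≤ t ^ ((3:ℝ)/2 - 1) * Real.exp (-t))]
  rw [div_le_iff₀ (lt_of_lt_of_le hδ (h t ht))]
  calc t ^ ((3:ℝ)/2 - 1) * Real.exp (-t)
      = (δ⁻¹ * (Real.exp (-t) * t ^ ((3:ℝ)/2 - 1))) * δ := by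
        field_simp
    _ ≤ (δ⁻¹ * (Real.exp (-t) * t ^ ((3:ℝ)/2 - 1))) * ‖1 - a * ((Real.exp (-t) : ℝ) : ℂ)‖ := by
        gcongr
        exact h t ht

lemma integrable_integrand {a : ℂ} {δ : ℝ} (hδ : 0 < δ)
    (h : ∀ t : ℝ, 0 < t → δ ≤ ‖1 - a * ((Real.exp (-t) : ℝ) : ℂ)‖) :
    IntegrableOn (fun t : ℝ => ((t ^ ((3:ℝ)/2 - 1) * Real.exp (-t) : ℝ) : ℂ) /
      (1 - a * ((Real.exp (-t) : ℝ) : ℂ))) (Ioi 0) := by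
  apply Integrable.mono' (integrable_bound δ) (meas_integrand a)
  filter_upwards [ae_restrict_mem measurableSet_Ioi] with t ht
  exact norm_integrand_le hδ h t ht

lemma norm_integral_le {a : ℂ} {δ : ℝ} (hδ : 0 < δ)
    (h : ∀ t : ℝ, 0 < t → δ ≤ ‖1 - a * ((Real.exp (-t) : ℝ) : ℂ)‖) :
    ‖∫ t in Ioi (0:ℝ), ((t ^ ((3:ℝ)/2 - 1) * Real.exp (-t) : ℝ) : ℂ) /
      (1 - a * ((Real.exp (-t) : ℝ) : ℂ))‖ ≤ δ⁻¹ * Real.Gamma (3/2) := by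
  have hb := integrable_bound δ
  calc ‖∫ t in Ioi (0:ℝ), ((t ^ ((3:ℝ)/2 - 1) * Real.exp (-t) : ℝ) : ℂ) /
      (1 - a * ((Real.exp (-t) : ℝ) : ℂ))‖
      ≤ ∫ t in Ioi (0:ℝ), δ⁻¹ * (Real.exp (-t) * t ^ ((3:ℝ)/2 - 1)) := by
        apply norm_integral_le_of_norm_le hb
        filter_upwards [ae_restrict_mem measurableSet_Ioi] with t ht
        exact norm_integrand_le hδ h t ht
    _ = δ⁻¹ * Real.Gamma (3/2) := by
        rw [integral_const_mul, ← Real.Gamma_eq_integral (by norm_num : (0:ℝ) < 3/2)]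

lemma boseFermi_norm_le {ε ζ : ℂ} {δ : ℝ} (hδ : 0 < δ)
    (h : ∀ t : ℝ, 0 < t → δ ≤ ‖1 - ζ * ε * ((Real.exp (-t) : ℝ) : ℂ)‖) :
    ‖boseFermi (3/2) ε ζ‖ ≤ ‖ζ‖ / δ := by
  have hΓ : 0 < Real.Gamma (3/2) := Real.Gamma_pos_of_pos (by norm_num)
  rw [boseFermi, norm_mul, norm_div, Complex.norm_real, Real.norm_eq_abs, abs_of_pos hΓ]
  calc ‖ζ‖ / Real.Gamma (3/2) * ‖∫ t in Ioi (0:ℝ), ((t ^ ((3:ℝ)/2 - 1) * Real.exp (-t) : ℝ) : ℂ) /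
      (1 - ζ * ε * ((Real.exp (-t) : ℝ) : ℂ))‖
      ≤ ‖ζ‖ / Real.Gamma (3/2) * (δ⁻¹ * Real.Gamma (3/2)) := by
        gcongr
        exact norm_integral_le hδ h
    _ = ‖ζ‖ / δ := by field_simp

lemma denom_bound {ε : ℂ} {β ω : ℝ} {z₀ : ℂ} {r δ : ℝ}
    (hM : ∀ z ∈ Metric.closedBall z₀ r, ∀ s ∈ Icc (0:ℝ) (Real.exp (-(β*ω/2))),
      δ ≤ ‖1 - z * ε * (s:ℂ)‖)
    {c : ℝ} (hc0 : 0 < c) (hcM : c ≤ Real.exp (-(β*ω/2)))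
    {w : ℂ} (hw : w ∈ Metric.closedBall z₀ r) (t : ℝ) (ht : 0 < t) :
    δ ≤ ‖1 - w * (c:ℂ) * ε * ((Real.exp (-t):ℝ):ℂ)‖ := by
  have he : w * (c:ℂ) * ε * ((Real.exp (-t):ℝ):ℂ) = w * ε * (((c * Real.exp (-t)):ℝ):ℂ) := by
    push_cast; ring
  rw [he]
  apply hM w hw
  constructor
  · positivity
  · have h2 : Real.exp (-t) ≤ 1 := Real.exp_le_one_iff.mpr (by linarith)
    nlinarith

lemma diff_term {ε : ℂ} {β ω : ℝ} {z₀ : ℂ} {r δ : ℝ} (hδ : 0 < δ) (hεn : ‖ε‖ = 1)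
    (hM : ∀ z ∈ Metric.closedBall z₀ r, ∀ s ∈ Icc (0:ℝ) (Real.exp (-(β*ω/2))),
      δ ≤ ‖1 - z * ε * (s:ℂ)‖)
    (hM1 : Real.exp (-(β*ω/2)) ≤ 1)
    {c : ℝ} (hc0 : 0 < c) (hcM : c ≤ Real.exp (-(β*ω/2)))
    {z : ℂ} (hz : z ∈ Metric.ball z₀ r) :
    DifferentiableAt ℂ (fun w : ℂ => boseFermi (3/2) ε (w * (c:ℂ))) z := by
  obtain ⟨ρ, hρ, hball⟩ := Metric.isOpen_iff.mp Metric.isOpen_ball z hz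
  have hball' : Metric.ball z ρ ⊆ Metric.closedBall z₀ r :=
    hball.trans Metric.ball_subset_closedBall
  set F : ℂ → ℝ → ℂ := fun w t => ((t ^ ((3:ℝ)/2 - 1) * Real.exp (-t) : ℝ) : ℂ) /
      (1 - w * (c:ℂ) * ε * ((Real.exp (-t):ℝ):ℂ)) with hF
  set F' : ℂ → ℝ → ℂ := fun w t => ((t ^ ((3:ℝ)/2 - 1) * Real.exp (-t) : ℝ) : ℂ) *
      ((c:ℂ) * ε * ((Real.exp (-t):ℝ):ℂ)) /
      (1 - w * (c:ℂ) * ε * ((Real.exp (-t):ℝ):ℂ)) ^ 2 with hF'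
  have key := hasDerivAt_integral_of_dominated_loc_of_deriv_le
      (μ := volume.restrict (Ioi (0:ℝ))) (F := F) (F' := F')
      (bound := fun t => δ⁻¹ * (δ⁻¹ * (Real.exp (-t) * t ^ ((3:ℝ)/2 - 1)))) (Metric.ball_mem_nhds z hρ)
      (Filter.Eventually.of_forall fun w => meas_integrand (w * (c:ℂ) * ε))
      (integrable_integrand hδ (fun t ht =>
        denom_bound hM hc0 hcM (Metric.ball_subset_closedBall hz) t ht))
      ?_ ?_ ?_ ?_
  · -- conclude
    have hI : DifferentiableAt ℂ (fun w : ℂ => ∫ t in Ioi (0:ℝ), F w t) z :=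
      key.2.differentiableAt
    have heq : (fun w : ℂ => boseFermi (3/2) ε (w * (c:ℂ))) =
        fun w : ℂ => (w * (c:ℂ) / ((Real.Gamma (3/2) : ℝ) : ℂ)) *
          ∫ t in Ioi (0:ℝ), F w t := rfl
    rw [heq]
    exact ((differentiableAt_id.mul_const _).div_const _).mul hI
  · -- F' z measurable
    apply Measurable.aestronglyMeasurable
    exact ((Complex.measurable_ofReal.comp cont_num.measurable).mul
      (by fun_prop : Measurable fun t : ℝ => (c:ℂ) * ε * ((Real.exp (-t):ℝ):ℂ))).div
      (by fun_prop : Measurable fun t : ℝ =>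
        (1 - z * (c:ℂ) * ε * ((Real.exp (-t):ℝ):ℂ)) ^ 2)
  · -- bound
    filter_upwards [ae_restrict_mem measurableSet_Ioi] with t ht w hw
    have hden := denom_bound hM hc0 hcM (hball' hw) t ht
    rw [mem_Ioi] at ht
    have hnum0 : (0:ℝ) ≤ t ^ ((3:ℝ)/2 - 1) * Real.exp (-t) :=
      mul_nonneg (Real.rpow_nonneg ht.le _) (Real.exp_pos _).le
    have h1 : ‖((t ^ ((3:ℝ)/2 - 1) * Real.exp (-t) : ℝ) : ℂ) *
        ((c:ℂ) * ε * ((Real.exp (-t):ℝ):ℂ))‖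
        = (t ^ ((3:ℝ)/2 - 1) * Real.exp (-t)) * (c * Real.exp (-t)) := by
      rw [norm_mul, norm_mul, norm_mul, hεn, Complex.norm_real, Complex.norm_real,
        Complex.norm_real, Real.norm_eq_abs, Real.norm_eq_abs, Real.norm_eq_abs,
        abs_of_nonneg hnum0, abs_of_pos hc0, abs_of_pos (Real.exp_pos _)]
      ring
    have hce : c * Real.exp (-t) ≤ 1 := by
      have h2 : Real.exp (-t) ≤ 1 := Real.exp_le_one_iff.mpr (by linarith)
      nlinarith
    calc ‖F' w t‖ = ((t ^ ((3:ℝ)/2 - 1) * Real.exp (-t)) * (c * Real.exp (-t))) /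
        ‖1 - w * (c:ℂ) * ε * ((Real.exp (-t):ℝ):ℂ)‖ ^ 2 := by
          rw [hF', norm_div, norm_pow, h1]
      _ ≤ ((t ^ ((3:ℝ)/2 - 1) * Real.exp (-t)) * 1) / δ ^ 2 :=
          div_le_div₀ (by positivity) (by nlinarith) (by positivity) (by gcongr)
      _ = δ⁻¹ * (δ⁻¹ * (Real.exp (-t) * t ^ ((3:ℝ)/2 - 1))) := by
          field_simp
  · exact (integrable_bound δ).const_mul _
  · -- differentiability
    filter_upwards [ae_restrict_mem measurableSet_Ioi] with t ht w hw
    have hden0 : (1 - w * (c:ℂ) * ε * ((Real.exp (-t):ℝ):ℂ)) ≠ 0 := by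
      intro h0
      have := denom_bound hM hc0 hcM (hball' hw) t ht
      rw [h0, norm_zero] at this
      linarith
    have hd : HasDerivAt (fun v : ℂ => 1 - v * (c:ℂ) * ε * ((Real.exp (-t):ℝ):ℂ))
        (-(1 * (c:ℂ) * ε * ((Real.exp (-t):ℝ):ℂ))) w :=
      ((((hasDerivAt_id w).mul_const ((c:ℂ))).mul_const ε).mul_const
        (((Real.exp (-t):ℝ):ℂ))).const_sub 1
    have hc := (hasDerivAt_const w (((t ^ ((3:ℝ)/2 - 1) * Real.exp (-t) : ℝ)) : ℂ)).div hd hden0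
    refine hc.congr_deriv ?_
    rw [hF']
    field_simp
    ring

end BFAux

/-- For `β, ω > 0` and `ε ∈ {1,−1}`: for every `z` in the domain `D_±` and every
`k ≥ 0` the point `z e^{−(k+1/2)ωβ}` lies in the analyticity domain of `f_{3/2}^ε`,
the series `P_∞(β,z,ω) = ω (2πβ)^{−3/2} Σ_{k≥0} f_{3/2}^ε(z e^{−(k+1/2)ωβ})`
converges, and `z ↦ P_∞(β,z,ω)` is complex-differentiable (analytic) on `D_±`. -/
theorem pressure_thermodynamic_limit_analytic (β ω : ℝ) (hβ : 0 < β) (hω : 0 < ω)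
    (ε : ℂ) (hε : ε = 1 ∨ ε = -1) :
    (∀ z ∈ pressureDomain ε β ω,
      (∀ k : ℕ,
        z * ((Real.exp (-(((k : ℝ) + 1 / 2) * ω * β)) : ℝ) : ℂ) ∈ cutPlane ε) ∧
      Summable (fun k : ℕ =>
        boseFermi (3 / 2) ε
          (z * ((Real.exp (-(((k : ℝ) + 1 / 2) * ω * β)) : ℝ) : ℂ)))) ∧
    DifferentiableOn ℂ
      (fun z : ℂ => ((ω * (2 * π * β) ^ (-(3 : ℝ) / 2) : ℝ) : ℂ) *
        ∑' k : ℕ, boseFermi (3 / 2) ε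
          (z * ((Real.exp (-(((k : ℝ) + 1 / 2) * ω * β)) : ℝ) : ℂ)))
      (pressureDomain ε β ω) := by
  have hεn : ‖ε‖ = 1 := by rcases hε with rfl | rfl <;> simp
  have hM1 : Real.exp (-(β * ω / 2)) ≤ 1 := Real.exp_le_one_iff.mpr (by nlinarith)
  have hck : ∀ k : ℕ, 0 < Real.exp (-(((k : ℝ) + 1 / 2) * ω * β)) := fun k => Real.exp_pos _
  have hckM : ∀ k : ℕ, Real.exp (-(((k : ℝ) + 1 / 2) * ω * β)) ≤ Real.exp (-(β * ω / 2)) := by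
    intro k
    apply Real.exp_le_exp.mpr
    have hk : (0:ℝ) ≤ (k : ℝ) := Nat.cast_nonneg k
    nlinarith [mul_nonneg (mul_nonneg hk hω.le) hβ.le]
  have hgeo : Summable (fun k : ℕ => Real.exp (-(ω * β)) ^ k) :=
    summable_geometric_of_lt_one (Real.exp_pos _).le
      (Real.exp_lt_one_iff.mpr (by nlinarith))
  have hckgeo : ∀ k : ℕ, Real.exp (-(((k : ℝ) + 1 / 2) * ω * β)) ≤ Real.exp (-(ω * β)) ^ k := by
    intro k
    rw [← Real.exp_nat_mul]
    apply Real.exp_le_exp.mpr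
    have hk : (0:ℝ) ≤ (k : ℝ) := Nat.cast_nonneg k
    nlinarith [mul_nonneg (mul_nonneg hk hω.le) hβ.le]
  constructor
  · intro z hz
    constructor
    · intro k
      rintro ⟨h1, h2⟩
      have hrw : ε * (z * ((Real.exp (-(((k : ℝ) + 1 / 2) * ω * β)) : ℝ) : ℂ)) =
          (ε * z) * ((Real.exp (-(((k : ℝ) + 1 / 2) * ω * β)) : ℝ) : ℂ) := by ring
      rw [hrw] at h1 h2
      set w := ε * z with hw
      simp only [Complex.mul_im, Complex.mul_re, Complex.ofReal_re, Complex.ofReal_im,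
        mul_zero, zero_mul, add_zero, sub_zero, zero_add] at h1 h2
      apply hz
      constructor
      · rcases mul_eq_zero.mp h1 with h | h
        · exact h
        · exact absurd h (hck k).ne'
      · have hq : Real.exp (β * ω / 2) * Real.exp (-(((k : ℝ) + 1 / 2) * ω * β)) ≤ 1 := by
          rw [← Real.exp_add]
          apply Real.exp_le_one_iff.mpr
          have hk : (0:ℝ) ≤ (k : ℝ) := Nat.cast_nonneg k
          nlinarith [mul_nonneg (mul_nonneg hk hω.le) hβ.le]
        have hcpos := hck k
        have h3 : Real.exp (β * ω / 2) * Real.exp (-(((k : ℝ) + 1 / 2) * ω * β)) ≤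
            w.re * Real.exp (-(((k : ℝ) + 1 / 2) * ω * β)) := le_trans hq (by linarith)
        exact le_of_mul_le_mul_right h3 hcpos
    · obtain ⟨r, hr, δ, hδ, hsub, hMb⟩ := BFAux.exists_delta hz
      apply Summable.of_norm_bounded (g := fun k : ℕ => (‖z‖ / δ) * Real.exp (-(ω * β)) ^ k)
        (hgeo.mul_left _)
      intro k
      have hb : ∀ t : ℝ, 0 < t → δ ≤
          ‖1 - z * ((Real.exp (-(((k : ℝ) + 1 / 2) * ω * β)) : ℝ) : ℂ) * ε *
            ((Real.exp (-t) : ℝ) : ℂ)‖ :=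
        fun t ht => BFAux.denom_bound hMb (hck k) (hckM k)
          (Metric.mem_closedBall_self hr.le) t ht
      calc ‖boseFermi (3 / 2) ε (z * ((Real.exp (-(((k : ℝ) + 1 / 2) * ω * β)) : ℝ) : ℂ))‖
          ≤ ‖z * ((Real.exp (-(((k : ℝ) + 1 / 2) * ω * β)) : ℝ) : ℂ)‖ / δ :=
            BFAux.boseFermi_norm_le hδ hb
        _ = ‖z‖ / δ * Real.exp (-(((k : ℝ) + 1 / 2) * ω * β)) := by
            rw [norm_mul, Complex.norm_real, Real.norm_eq_abs, abs_of_pos (hck k)]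
            ring
        _ ≤ ‖z‖ / δ * Real.exp (-(ω * β)) ^ k :=
            mul_le_mul_of_nonneg_left (hckgeo k) (by positivity)
  · intro z₀ hz₀
    obtain ⟨r, hr, δ, hδ, hsub, hMb⟩ := BFAux.exists_delta hz₀
    have htu : TendstoUniformlyOn
        (fun (s : Finset ℕ) (z : ℂ) => ∑ k ∈ s, boseFermi (3 / 2) ε
          (z * ((Real.exp (-(((k : ℝ) + 1 / 2) * ω * β)) : ℝ) : ℂ)))
        (fun z : ℂ => ∑' k : ℕ, boseFermi (3 / 2) ε
          (z * ((Real.exp (-(((k : ℝ) + 1 / 2) * ω * β)) : ℝ) : ℂ)))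
        Filter.atTop (Metric.ball z₀ r) := by
      have hu : Summable (fun k : ℕ => (‖z₀‖ + r) / δ * Real.exp (-(ω * β)) ^ k) :=
        hgeo.mul_left _
      apply tendstoUniformlyOn_tsum hu
      intro k z hzb
      have hzc : z ∈ Metric.closedBall z₀ r := Metric.ball_subset_closedBall hzb
      have hb : ∀ t : ℝ, 0 < t → δ ≤
          ‖1 - z * ((Real.exp (-(((k : ℝ) + 1 / 2) * ω * β)) : ℝ) : ℂ) * ε *
            ((Real.exp (-t) : ℝ) : ℂ)‖ :=
        fun t ht => BFAux.denom_bound hMb (hck k) (hckM k) hzc t ht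
      have hzn : ‖z‖ ≤ ‖z₀‖ + r := by
        have hd : dist z z₀ ≤ r := Metric.mem_closedBall.mp hzc
        calc ‖z‖ = ‖z₀ + (z - z₀)‖ := by ring_nf
          _ ≤ ‖z₀‖ + ‖z - z₀‖ := norm_add_le _ _
          _ ≤ ‖z₀‖ + r := by
              rw [← dist_eq_norm]
              linarith
      calc ‖boseFermi (3 / 2) ε (z * ((Real.exp (-(((k : ℝ) + 1 / 2) * ω * β)) : ℝ) : ℂ))‖
          ≤ ‖z * ((Real.exp (-(((k : ℝ) + 1 / 2) * ω * β)) : ℝ) : ℂ)‖ / δ :=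
            BFAux.boseFermi_norm_le hδ hb
        _ = ‖z‖ / δ * Real.exp (-(((k : ℝ) + 1 / 2) * ω * β)) := by
            rw [norm_mul, Complex.norm_real, Real.norm_eq_abs, abs_of_pos (hck k)]
            ring
        _ ≤ (‖z₀‖ + r) / δ * Real.exp (-(ω * β)) ^ k :=
            mul_le_mul (by gcongr) (hckgeo k) (hck k).le (by positivity)
    have hdiff : DifferentiableOn ℂ
        (fun z : ℂ => ∑' k : ℕ, boseFermi (3 / 2) ε
          (z * ((Real.exp (-(((k : ℝ) + 1 / 2) * ω * β)) : ℝ) : ℂ)))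
        (Metric.ball z₀ r) := by
      apply htu.tendstoLocallyUniformlyOn.differentiableOn ?_ Metric.isOpen_ball
      apply Filter.Eventually.of_forall
      intro s
      apply DifferentiableOn.fun_sum
      intro k _
      intro z hzb
      exact (BFAux.diff_term hδ hεn hMb hM1 (hck k) (hckM k) hzb).differentiableWithinAt
    have h1 : DifferentiableAt ℂ
        (fun z : ℂ => ∑' k : ℕ, boseFermi (3 / 2) ε
          (z * ((Real.exp (-(((k : ℝ) + 1 / 2) * ω * β)) : ℝ) : ℂ))) z₀ :=
      hdiff.differentiableAt (Metric.isOpen_ball.mem_nhds (Metric.mem_ball_self hr))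
    exact (h1.const_mul _).differentiableWithinAt
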